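/- arXiv:1101.3696 — 3 statements merged into one kernel-verified Lean document; each statement's English description precedes it below -/
import Mathlib

section
/- Let k be a field of characteristic ≠ 2 with an involution σ (a ring automorphism with σ² = id). If A is a nonzero n×n matrix over k with A + A* = 0, where A* = σ(A)ᵗ (σ applied entrywise), then there exists an n×n matrix B with B + B* = 0 and trace(A·B) ≠ 0. -/
open Matrix

lemma map_stdBasisMatrix_aux {k : Type*} [Field k] (σ : k ≃+* k) {n : ℕ}
    (i j : Fin n) :
    (Matrix.single i j (1 : k)).map σ = Matrix.single i j 1 := by
  ext a b
  simp [Matrix.single, Matrix.map_apply, apply_ite]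

lemma trace_mul_stdBasisMatrix_aux {k : Type*} [Field k] {n : ℕ}
    (A : Matrix (Fin n) (Fin n) k) (i j : Fin n) :
    (A * Matrix.single i j (1 : k)).trace = A j i := by
  simp [Matrix.trace, Matrix.diag, Matrix.mul_apply, Matrix.single,
    Finset.sum_ite_eq, ite_and]

theorem trace_form_nondegenerate_on_skew_hermitian
    (k : Type*) [Field k] (hchar : ringChar k ≠ 2)
    (σ : k ≃+* k) (hσ : ∀ x, σ (σ x) = x)
    (n : ℕ) (A : Matrix (Fin n) (Fin n) k) (hA : A ≠ 0)
    (hskew : A + (A.map σ)ᵀ = 0) :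
    ∃ B : Matrix (Fin n) (Fin n) k, B + (B.map σ)ᵀ = 0 ∧ (A * B).trace ≠ 0 := by
  obtain ⟨i, j, hij⟩ : ∃ i j, A i j ≠ 0 := by
    by_contra h
    push_neg at h
    exact hA (by ext i j; simpa using h i j)
  set a := A i j with ha
  have haji : A j i = -σ a := by
    have h := congrFun (congrFun hskew j) i
    simp only [Matrix.add_apply, Matrix.transpose_apply, Matrix.map_apply,
      Matrix.zero_apply] at h
    linear_combination h
  refine ⟨a⁻¹ • Matrix.single j i 1 - σ a⁻¹ • Matrix.single i j 1, ?_, ?_⟩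
  · ext x y
    simp only [Matrix.add_apply, Matrix.transpose_apply, Matrix.map_apply,
      Matrix.sub_apply, Matrix.smul_apply, smul_eq_mul, Matrix.single,
      Matrix.of_apply, mul_ite, mul_one, mul_zero, map_sub, Matrix.zero_apply,
      apply_ite σ, map_zero, hσ]
    split_ifs <;> first | ring1 | tauto
  · have h2 : (A * (a⁻¹ • Matrix.single j i 1
        - σ a⁻¹ • Matrix.single i j 1)).trace
        = a⁻¹ * A i j - σ a⁻¹ * A j i := by
      rw [Matrix.mul_sub, Matrix.mul_smul, Matrix.mul_smul, Matrix.trace_sub,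
        Matrix.trace_smul, Matrix.trace_smul, trace_mul_stdBasisMatrix_aux,
        trace_mul_stdBasisMatrix_aux]
      simp [smul_eq_mul]
    rw [h2, haji, ← ha]
    have hσa : σ a ≠ 0 := fun h0 => hij (by simpa [hσ] using congrArg σ h0)
    have h3 : a⁻¹ * a - σ a⁻¹ * -σ a = 2 := by
      rw [inv_mul_cancel₀ hij, map_inv₀, mul_neg, inv_mul_cancel₀ hσa]
      ring
    rw [h3]
    intro h
    exact Ring.two_ne_zero hchar h
end

section
/- Let k be a field of characteristic ≠ 2 and J = [[0, Iₙ],[-Iₙ, 0]]. The trace form on the symplectic Lie algebra is non-degenerate: if A is a 2n×2n matrix over k with Aᵗ·J + J·A = 0 and trace(A·X) = 0 for every 2n×2n matrix X with Xᵗ·J + J·X = 0, then A = 0. -/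
open Matrix

theorem trace_form_nondegenerate_on_symplectic_lie_algebra
    (k : Type*) [Field k] (hchar : ringChar k ≠ 2) (n : ℕ)
    (A : Matrix (Fin n ⊕ Fin n) (Fin n ⊕ Fin n) k)
    (hA : Aᵀ * Matrix.fromBlocks 0 1 (-1) 0 + Matrix.fromBlocks 0 1 (-1) 0 * A = 0)
    (h : ∀ X : Matrix (Fin n ⊕ Fin n) (Fin n ⊕ Fin n) k,
      Xᵀ * Matrix.fromBlocks 0 1 (-1) 0 + Matrix.fromBlocks 0 1 (-1) 0 * X = 0 →
      (A * X).trace = 0) :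
    A = 0 := by
  set J : Matrix (Fin n ⊕ Fin n) (Fin n ⊕ Fin n) k := Matrix.fromBlocks 0 1 (-1) 0 with hJ
  have htwo : (2 : k) ≠ 0 := Ring.two_ne_zero hchar
  have hJT : Jᵀ = -J := by
    simp [hJ, Matrix.fromBlocks_transpose, Matrix.fromBlocks_neg]
  have hJJ : J * J = -1 := by
    rw [hJ, Matrix.fromBlocks_multiply, show (-1 : Matrix (Fin n ⊕ Fin n) (Fin n ⊕ Fin n) k) =
      -(Matrix.fromBlocks 1 0 0 1) by rw [Matrix.fromBlocks_one], Matrix.fromBlocks_neg]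
    simp
  have hATJ : Aᵀ * J = -(J * A) := eq_neg_of_add_eq_zero_left hA
  have hAfix : J * Aᵀ * J = A := by
    rw [mul_assoc, hATJ, mul_neg, ← mul_assoc, hJJ, neg_mul, one_mul, neg_neg]
  -- trace (A * Y) = 0 for all Y
  have key : ∀ Y : Matrix (Fin n ⊕ Fin n) (Fin n ⊕ Fin n) k, (A * Y).trace = 0 := by
    intro Y
    set X : Matrix (Fin n ⊕ Fin n) (Fin n ⊕ Fin n) k := Y + J * Yᵀ * J with hXdef
    have e1 : (J * Yᵀ * J)ᵀ * J = -(J * Y) := by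
      rw [Matrix.transpose_mul, Matrix.transpose_mul, Matrix.transpose_transpose, hJT]
      rw [show -J * (Y * -J) * J = J * Y * (J * J) by noncomm_ring, hJJ]
      rw [mul_neg_one]
    have e2 : J * (J * Yᵀ * J) = -(Yᵀ * J) := by
      rw [show J * (J * Yᵀ * J) = (J * J) * (Yᵀ * J) by noncomm_ring, hJJ]
      rw [neg_one_mul]
    have hX : Xᵀ * J + J * X = 0 := by
      rw [hXdef, Matrix.transpose_add, add_mul, mul_add, e1, e2]
      abel
    have htr := h X hX
    have e3 : (A * (J * Yᵀ * J)).trace = (A * Y).trace := by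
      conv_lhs => rw [← hAfix]
      have step : J * Aᵀ * J * (J * Yᵀ * J) = -(J * (Aᵀ * Yᵀ) * J) := by
        rw [show J * Aᵀ * J * (J * Yᵀ * J) = J * Aᵀ * (J * J) * Yᵀ * J by noncomm_ring, hJJ]
        noncomm_ring
      rw [step, Matrix.trace_neg, Matrix.trace_mul_cycle, hJJ, neg_one_mul, Matrix.trace_neg,
        neg_neg, ← Matrix.transpose_mul, Matrix.trace_transpose, Matrix.trace_mul_comm]
    rw [hXdef, mul_add, Matrix.trace_add, e3, ← two_mul] at htr
    exact (mul_eq_zero.mp htr).resolve_left htwo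
  -- conclude A = 0
  ext i j
  have := key (Matrix.single j i 1)
  rw [Matrix.trace, Finset.sum_eq_single i
    (fun b _ hb => by simp [Matrix.diag_apply, hb]) (by simp)] at this
  simpa using this
end

section
/- Let G be a finite group, N ◁ G a normal subgroup, and ρ an irreducible complex representation of N with stabilizer T(ρ) = {g ∈ G : ρᵍ ≅ ρ}. If θ is an irreducible representation of T(ρ) whose restriction to N contains ρ, then Ind_{T(ρ)}^G θ is irreducible. -/
open Representation

section RepAux
variable {K : Type*} [Group K] {X : Type*} [AddCommGroup X] [Module ℂ X] (σ : Representation ℂ K X)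

/-- A `σ`-invariant `ℂ`-submodule, as a submodule over the monoid algebra. -/
def invtSub (p : Submodule ℂ X) (hp : ∀ (g : K) (x : X), x ∈ p → σ g x ∈ p) :
    Submodule (MonoidAlgebra ℂ K) σ.asModule where
  carrier := {x : σ.asModule | σ.asModuleEquiv x ∈ p}
  add_mem' := by intro a b ha hb; show σ.asModuleEquiv (a + b) ∈ p; rw [map_add]; exact p.add_mem ha hb
  zero_mem' := by simpa using p.zero_mem
  smul_mem' := by
    intro r x hx
    show σ.asModuleEquiv (r • x) ∈ p
    rw [σ.asModuleEquiv_map_smul]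
    induction r using MonoidAlgebra.induction_on with
    | of g => simp; exact hp g _ hx
    | add a b ha hb => simpa [map_add] using p.add_mem ha hb
    | smul c a ha => simpa [map_smul] using p.smul_mem c ha

@[simp] lemma mem_invtSub {p : Submodule ℂ X} {hp} (x : σ.asModule) :
    x ∈ invtSub σ p hp ↔ σ.asModuleEquiv x ∈ p := Iff.rfl

/-- The underlying `ℂ`-submodule of a monoid-algebra submodule. -/
def subDown (q : Submodule (MonoidAlgebra ℂ K) σ.asModule) : Submodule ℂ X where
  carrier := {x : X | σ.asModuleEquiv.symm x ∈ q}
  add_mem' := by intro a b ha hb; show σ.asModuleEquiv.symm (a + b) ∈ q; rw [map_add]; exact q.add_mem ha hb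
  zero_mem' := by simpa using q.zero_mem
  smul_mem' := by
    intro c x hx
    show σ.asModuleEquiv.symm (c • x) ∈ q
    rw [σ.asModuleEquiv_symm_map_smul]
    exact q.smul_mem _ hx

@[simp] lemma mem_subDown {q : Submodule (MonoidAlgebra ℂ K) σ.asModule} (x : X) :
    x ∈ subDown σ q ↔ σ.asModuleEquiv.symm x ∈ q := Iff.rfl

lemma subDown_invt (q : Submodule (MonoidAlgebra ℂ K) σ.asModule) (g : K) (x : X)
    (hx : x ∈ subDown σ q) : σ g x ∈ subDown σ q := by
  rw [mem_subDown, asModuleEquiv_symm_map_rho]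
  exact q.smul_mem _ hx

lemma subDown_bot_top (q : Submodule (MonoidAlgebra ℂ K) σ.asModule) :
    (subDown σ q = ⊥ → q = ⊥) ∧ (subDown σ q = ⊤ → q = ⊤) := by
  constructor
  · intro h
    rw [eq_bot_iff]; intro x hx
    have : σ.asModuleEquiv x ∈ subDown σ q := by simpa using hx
    rw [h] at this
    simpa using (by simpa using this : σ.asModuleEquiv x = 0)
  · intro h
    rw [eq_top_iff]; intro x _
    have : σ.asModuleEquiv x ∈ subDown σ q := h ▸ Submodule.mem_top
    simpa using this

/-- Simplicity implies every invariant subspace is trivial. -/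
lemma invariant_eq_bot_or_top (hσ : IsSimpleModule (MonoidAlgebra ℂ K) σ.asModule)
    (p : Submodule ℂ X) (hp : ∀ (g : K) (x : X), x ∈ p → σ g x ∈ p) :
    p = ⊥ ∨ p = ⊤ := by
  rcases hσ.1.2 (invtSub σ p hp) with h | h
  · left; rw [eq_bot_iff]; intro x hx
    have : σ.asModuleEquiv.symm x ∈ invtSub σ p hp := by simpa using hx
    rw [h] at this
    simpa using (by simpa using this : σ.asModuleEquiv.symm x = 0)
  · right; rw [eq_top_iff]; intro x _
    have : σ.asModuleEquiv.symm x ∈ invtSub σ p hp := h ▸ Submodule.mem_top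
    simpa using this

lemma nontrivial_of_simple (hσ : IsSimpleModule (MonoidAlgebra ℂ K) σ.asModule) :
    Nontrivial X := by
  rcases subsingleton_or_nontrivial X with hs | hn
  · exfalso
    have hs' : Subsingleton σ.asModule :=
      ⟨fun a b => σ.asModuleEquiv.injective (Subsingleton.elim _ _)⟩
    have : Subsingleton (Submodule (MonoidAlgebra ℂ K) σ.asModule) := inferInstance
    exact hσ.1.exists_pair_ne.elim fun a ⟨b, hab⟩ => hab (Subsingleton.elim a b)
  · exact hn

/-- Build simplicity from invariant-subspace triviality. -/
lemma simple_of_invariant (hX : ∃ x : X, x ≠ 0)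
    (h : ∀ p : Submodule ℂ X, (∀ (g : K) (x : X), x ∈ p → σ g x ∈ p) → p = ⊥ ∨ p = ⊤) :
    IsSimpleModule (MonoidAlgebra ℂ K) σ.asModule := by
  have hnt : Nontrivial (Submodule (MonoidAlgebra ℂ K) σ.asModule) := by
    refine ⟨⊥, ⊤, fun hbt => ?_⟩
    obtain ⟨x, hx⟩ := hX
    have : σ.asModuleEquiv.symm x ∈ (⊥ : Submodule (MonoidAlgebra ℂ K) σ.asModule) := by
      rw [hbt]; trivial
    exact hx (by simpa using (by simpa using this : σ.asModuleEquiv.symm x = 0))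
  exact { toNontrivial := hnt
          eq_bot_or_eq_top := fun q => by
            rcases h (subDown σ q) (subDown_invt σ q) with hq | hq
            · exact Or.inl ((subDown_bot_top σ q).1 hq)
            · exact Or.inr ((subDown_bot_top σ q).2 hq) }

/-- Averaging: equivariant projection onto an invariant subspace. -/
lemma exists_equivariant_proj [Fintype K] (p : Submodule ℂ X)
    (hp : ∀ (g : K) (x : X), x ∈ p → σ g x ∈ p) :
    ∃ r : X →ₗ[ℂ] X, (∀ g : K, r ∘ₗ σ g = σ g ∘ₗ r) ∧ (∀ x ∈ p, r x = x) ∧ ∀ x, r x ∈ p := by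
  obtain ⟨q, hq⟩ := Submodule.exists_isCompl p
  set π₀ : X →ₗ[ℂ] X := p.subtype ∘ₗ p.projectionOnto q hq with hπ₀
  have hπ₀p : ∀ x ∈ p, π₀ x = x := fun x hx => by
    simp [hπ₀, Submodule.projectionOnto_apply_left hq ⟨x, hx⟩]
  have hπ₀mem : ∀ x, π₀ x ∈ p := fun x => (p.projectionOnto q hq x).2
  set n : ℂ := (Fintype.card K : ℂ)⁻¹ with hn
  have hcomp : ∀ (a b : K) (x : X), σ a (σ b x) = σ (a * b) x := fun a b x => by
    rw [map_mul]; rfl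
  refine ⟨n • ∑ g : K, (σ g⁻¹ ∘ₗ π₀ ∘ₗ σ g), ?_, ?_, ?_⟩
  · intro g
    ext x
    simp only [LinearMap.comp_apply, LinearMap.smul_apply, LinearMap.coe_sum,
      Finset.sum_apply, map_smul, map_sum]
    congr 1
    refine Fintype.sum_equiv (Equiv.mulRight g) _ _ fun h => ?_
    simp only [Equiv.coe_mulRight]
    rw [hcomp h g x, hcomp g (h * g)⁻¹, show g * (h * g)⁻¹ = h⁻¹ by group]
  · intro x hx
    have hterm : ∀ g : K, (σ g⁻¹ ∘ₗ π₀ ∘ₗ σ g) x = x := fun g => by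
      simp only [LinearMap.comp_apply]
      rw [hπ₀p _ (hp g x hx), hcomp, inv_mul_cancel, map_one, Module.End.one_apply]
    simp only [LinearMap.smul_apply, LinearMap.coe_sum, Finset.sum_apply, hterm,
      Finset.sum_const, Finset.card_univ, hn]
    rw [← Nat.cast_smul_eq_nsmul ℂ, smul_smul, inv_mul_cancel₀]
    · simp
    · exact_mod_cast Fintype.card_ne_zero
  · intro x
    apply p.smul_mem
    rw [LinearMap.sum_apply]
    apply p.sum_mem
    intro g _
    exact hp g⁻¹ _ (hπ₀mem _)

/-- Maschke for asModule submodules: complemented lattice. -/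
lemma complemented_asModule [Fintype K] :
    ComplementedLattice (Submodule (MonoidAlgebra ℂ K) σ.asModule) := by
  constructor
  intro P
  obtain ⟨r, hrequiv, hrid, hrmem⟩ := exists_equivariant_proj σ (subDown σ P) (subDown_invt σ P)
  have hker_invt : ∀ (g : K) (x : X), x ∈ LinearMap.ker r → σ g x ∈ LinearMap.ker r := by
    intro g x hx
    have := congrArg (fun φ => φ x) (hrequiv g)
    simp only [LinearMap.comp_apply] at this
    simp only [LinearMap.mem_ker] at hx ⊢
    rw [this, hx, map_zero]
  refine ⟨invtSub σ (LinearMap.ker r) hker_invt, ?_, ?_⟩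
  · rw [disjoint_iff, eq_bot_iff]
    intro x hx
    obtain ⟨hx1, hx2⟩ := Submodule.mem_inf.mp hx
    have h1 : σ.asModuleEquiv x ∈ subDown σ P := by simpa using hx1
    have h2 : r (σ.asModuleEquiv x) = 0 := by simpa using hx2
    have := hrid _ h1
    rw [h2] at this
    simpa using (by simpa using this.symm : σ.asModuleEquiv x = 0)
  · rw [codisjoint_iff, eq_top_iff]
    intro x _
    set y := σ.asModuleEquiv x with hy
    have hdecomp : y = r y + (y - r y) := by abel
    have h1 : σ.asModuleEquiv.symm (r y) ∈ P := by
      have : r y ∈ subDown σ P := hrmem y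
      simpa using this
    have h2 : σ.asModuleEquiv.symm (y - r y) ∈ invtSub σ (LinearMap.ker r) hker_invt := by
      simp only [mem_invtSub, LinearEquiv.apply_symm_apply, LinearMap.mem_ker, map_sub]
      rw [hrid (r y) (hrmem y), sub_self]
    have : x = σ.asModuleEquiv.symm (r y) + σ.asModuleEquiv.symm (y - r y) := by
      apply σ.asModuleEquiv.injective
      simp [hy]
    rw [this]
    exact Submodule.add_mem_sup h1 h2

end RepAux


/-- The carrier of the representation of `G` induced from a representation `θ`
of a subgroup `T` (realized as `θ`-equivariant functions `G → W`). -/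
def indCarrier {G : Type*} [Group G] (T : Subgroup G) {W : Type*} [AddCommGroup W]
    [Module ℂ W] (θ : Representation ℂ T W) : Submodule ℂ (G → W) where
  carrier := {f | ∀ (t : T) (g : G), f (↑t * g) = θ t (f g)}
  add_mem' := by
    intro a b ha hb t g
    simp [ha t g, hb t g]
  zero_mem' := by intro t g; simp
  smul_mem' := by
    intro c a ha t g
    simp [ha t g]

/-- The representation of `G` induced from the representation `θ` of the
subgroup `T`, with `G` acting by right translation. -/
def indRep {G : Type*} [Group G] (T : Subgroup G) {W : Type*} [AddCommGroup W]
    [Module ℂ W] (θ : Representation ℂ T W) :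
    Representation ℂ G (indCarrier T θ) where
  toFun g :=
    { toFun := fun f => ⟨fun x => f.1 (x * g), fun t y => by
        have h := f.2 t (y * g)
        rwa [← mul_assoc] at h⟩
      map_add' := fun f₁ f₂ => by ext x; rfl
      map_smul' := fun c f => by ext x; rfl }
  map_one' := by
    apply LinearMap.ext
    intro f
    apply Subtype.ext
    funext x
    simp
  map_mul' := fun g₁ g₂ => by
    apply LinearMap.ext
    intro f
    apply Subtype.ext
    funext x
    simp [mul_assoc]


section MainAux
variable {G : Type*} [Group G] [Fintype G] (N : Subgroup G) [hN : N.Normal]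
    {V : Type*} [AddCommGroup V] [Module ℂ V]
    (ρ : Representation ℂ N V)
    (T : Subgroup G) (hNT : N ≤ T)
    {W : Type*} [AddCommGroup W] [Module ℂ W]
    (θ : Representation ℂ T W)

lemma theta_comp_apply (n : N) :
    (θ.comp (Subgroup.inclusion hNT)) n = θ ⟨↑n, hNT n.2⟩ := rfl

/-- W is generated by equivariant images of V. -/
lemma wgen
    (hθ : IsSimpleModule (MonoidAlgebra ℂ T) θ.asModule)
    (hT : ∀ g : G, g ∈ T ↔ ∃ e : V ≃ₗ[ℂ] V, ∀ n : N,
      e.toLinearMap ∘ₗ ρ ⟨g * ↑n * g⁻¹, hN.conj_mem ↑n n.2 g⟩ = ρ n ∘ₗ e.toLinearMap)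
    (f : V →ₗ[ℂ] W) (hf : f ≠ 0)
    (hfequiv : ∀ n : N, f ∘ₗ ρ n = θ ⟨↑n, hNT n.2⟩ ∘ₗ f)
    (r : W →ₗ[ℂ] W) (hr : r ≠ 0) :
    ∃ h : V →ₗ[ℂ] W, (∀ n : N, h ∘ₗ ρ n = θ ⟨↑n, hNT n.2⟩ ∘ₗ h) ∧ r ∘ₗ h ≠ 0 := by
  classical
  have hθcomp : ∀ a b : T, θ a ∘ₗ θ b = θ (a * b) := fun a b => by
    ext w; simp [map_mul]
  set Sg : Submodule ℂ W := ⨆ t : T, LinearMap.range (θ t ∘ₗ f) with hSg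
  have hinv : ∀ (t : T) (x : W), x ∈ Sg → θ t x ∈ Sg := by
    intro t x hx
    refine Submodule.iSup_induction (motive := fun y => θ t y ∈ Sg) _ hx ?_ (by simp) ?_
    · intro s y hy
      obtain ⟨v, hv⟩ := hy
      have : θ t y = (θ (t * s) ∘ₗ f) v := by
        simp only [LinearMap.comp_apply] at hv ⊢
        rw [← hv, map_mul]; rfl
      rw [this]
      exact le_iSup (fun s : T => LinearMap.range (θ s ∘ₗ f)) (t * s)
        (LinearMap.mem_range_self _ v)
    · intro y z hy hz; rw [map_add]; exact Sg.add_mem hy hz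
  have hone : Sg ≠ ⊥ := by
    intro hbot
    obtain ⟨v, hv⟩ : ∃ v, f v ≠ 0 := by
      by_contra hcon; push_neg at hcon
      exact hf (LinearMap.ext fun v => by simpa using hcon v)
    have : f v ∈ Sg := by
      have : f v ∈ LinearMap.range (θ 1 ∘ₗ f) := ⟨v, by simp⟩
      exact (le_iSup (fun s : T => LinearMap.range (θ s ∘ₗ f)) 1) this
    rw [hbot] at this
    exact hv (by simpa using this)
  have hSgtop : Sg = ⊤ := by
    rcases invariant_eq_bot_or_top θ hθ Sg hinv with h | h
    · exact absurd h hone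
    · exact h
  have hex : ∃ t : T, r ∘ₗ (θ t ∘ₗ f) ≠ 0 := by
    by_contra hcon; push_neg at hcon
    apply hr
    ext x
    have hx : x ∈ Sg := hSgtop ▸ Submodule.mem_top
    refine Submodule.iSup_induction (motive := fun y => r y = 0) _ hx ?_ (by simp) ?_
    · intro s y hy
      obtain ⟨v, hv⟩ := hy
      rw [← hv]
      exact congrArg (fun φ => φ v) (hcon s)
    · intro y z hy hz; rw [map_add, hy, hz, add_zero]
  obtain ⟨t, ht⟩ := hex
  obtain ⟨e, he⟩ := (hT (t : G)).mp t.2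
  refine ⟨θ t ∘ₗ f ∘ₗ e.toLinearMap, ?_, ?_⟩
  · intro m
    have key : e.toLinearMap ∘ₗ ρ m = ρ ⟨(↑t)⁻¹ * ↑m * ↑t, by
        simpa using hN.conj_mem ↑m m.2 (↑t)⁻¹⟩ ∘ₗ e.toLinearMap := by
      have := he ⟨(↑t)⁻¹ * ↑m * ↑t, by simpa using hN.conj_mem ↑m m.2 (↑t)⁻¹⟩
      convert this using 3
      exact Subtype.ext (by group)
    set n₀ : N := ⟨(↑t)⁻¹ * ↑m * ↑t, by simpa using hN.conj_mem ↑m m.2 (↑t)⁻¹⟩ with hn₀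
    calc (θ t ∘ₗ f ∘ₗ e.toLinearMap) ∘ₗ ρ m
        = θ t ∘ₗ f ∘ₗ (e.toLinearMap ∘ₗ ρ m) := by simp [LinearMap.comp_assoc]
      _ = θ t ∘ₗ (f ∘ₗ ρ n₀) ∘ₗ e.toLinearMap := by rw [key]; simp [LinearMap.comp_assoc]
      _ = θ t ∘ₗ (θ ⟨↑n₀, hNT n₀.2⟩ ∘ₗ f) ∘ₗ e.toLinearMap := by rw [hfequiv]
      _ = (θ t ∘ₗ θ ⟨↑n₀, hNT n₀.2⟩) ∘ₗ f ∘ₗ e.toLinearMap := by simp [LinearMap.comp_assoc]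
      _ = θ ⟨↑m, hNT m.2⟩ ∘ₗ (θ t ∘ₗ f ∘ₗ e.toLinearMap) := by
          have : (t * ⟨↑n₀, hNT n₀.2⟩ : T) = (⟨↑m, hNT m.2⟩ : T) * t := by
            apply Subtype.ext
            show (t : G) * ((↑t)⁻¹ * ↑m * ↑t) = ↑m * ↑t
            group
          rw [hθcomp, this, ← hθcomp]
          simp [LinearMap.comp_assoc]
  · intro hcon
    apply ht
    ext v
    have h2 := congrArg (fun φ => φ (e.symm v)) hcon
    simp only [LinearMap.comp_apply, LinearEquiv.coe_coe, LinearMap.zero_apply] at h2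
    simpa [LinearEquiv.apply_symm_apply] using h2

/-- A nonzero twisted intertwiner forces membership in the inertia group. -/
lemma toE
    (hρ : IsSimpleModule (MonoidAlgebra ℂ N) ρ.asModule)
    (hθ : IsSimpleModule (MonoidAlgebra ℂ T) θ.asModule)
    (hT : ∀ g : G, g ∈ T ↔ ∃ e : V ≃ₗ[ℂ] V, ∀ n : N,
      e.toLinearMap ∘ₗ ρ ⟨g * ↑n * g⁻¹, hN.conj_mem ↑n n.2 g⟩ = ρ n ∘ₗ e.toLinearMap)
    (f : V →ₗ[ℂ] W) (hf : f ≠ 0)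
    (hfequiv : ∀ n : N, f ∘ₗ ρ n = θ ⟨↑n, hNT n.2⟩ ∘ₗ f)
    (a : G) (c : V →ₗ[ℂ] W) (hc : c ≠ 0)
    (hcequiv : ∀ n : N,
      c ∘ₗ ρ n = θ ⟨a * ↑n * a⁻¹, hNT (hN.conj_mem ↑n n.2 a)⟩ ∘ₗ c) :
    a ∈ T := by
  classical
  haveI : Fintype ↥N := Fintype.ofFinite _
  -- c is injective
  have hρ' := invariant_eq_bot_or_top ρ hρ
  have hkerc : LinearMap.ker c = ⊥ := by
    rcases hρ' (LinearMap.ker c) (fun n x hx => by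
      have := congrArg (fun φ => φ x) (hcequiv n)
      simp only [LinearMap.comp_apply] at this
      simp only [LinearMap.mem_ker] at hx ⊢
      rw [this, hx, map_zero]) with h | h
    · exact h
    · exact absurd (LinearMap.ker_eq_top.mp h) hc
  have hinjc : Function.Injective c := LinearMap.ker_eq_bot.mp hkerc
  -- the restriction of θ to N
  set ω : Representation ℂ N W := θ.comp (Subgroup.inclusion hNT) with hω
  have hωapp : ∀ (n : N) (w : W), ω n w = θ ⟨↑n, hNT n.2⟩ w := fun n w => rfl
  -- range c is ω-invariant
  have hrange_inv : ∀ (n : N) (x : W), x ∈ LinearMap.range c → ω n x ∈ LinearMap.range c := by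
    intro n x hx
    obtain ⟨v, rfl⟩ := hx
    refine ⟨ρ ⟨a⁻¹ * ↑n * a, by simpa using hN.conj_mem ↑n n.2 a⁻¹⟩ v, ?_⟩
    have h1 := congrArg (fun φ => φ v)
      (hcequiv ⟨a⁻¹ * ↑n * a, by simpa using hN.conj_mem ↑n n.2 a⁻¹⟩)
    simp only [LinearMap.comp_apply] at h1
    rw [hωapp, h1]
    exact DFunLike.congr_fun (congrArg θ (Subtype.ext (by group))) (c v)
  -- equivariant projection onto range c
  obtain ⟨r, hreq, hrid, hrmem⟩ := exists_equivariant_proj ω (LinearMap.range c) hrange_inv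
  have hrne : r ≠ 0 := by
    obtain ⟨v, hv⟩ : ∃ v, c v ≠ 0 := by
      by_contra hcon; push_neg at hcon
      exact hc (LinearMap.ext fun v => by simpa using hcon v)
    intro h0
    apply hv
    have := hrid (c v) (LinearMap.mem_range_self c v)
    rw [h0] at this
    simpa using this.symm
  obtain ⟨h, hheq, hrh⟩ := wgen N ρ T hNT θ hθ hT f hf hfequiv r hrne
  set φ : V →ₗ[ℂ] W := r ∘ₗ h with hφ
  have hφeq : ∀ n : N, φ ∘ₗ ρ n = θ ⟨↑n, hNT n.2⟩ ∘ₗ φ := by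
    intro n
    have h1 : φ ∘ₗ ρ n = r ∘ₗ (h ∘ₗ ρ n) := by simp [hφ, LinearMap.comp_assoc]
    rw [h1, hheq n, ← LinearMap.comp_assoc]
    have h2 : r ∘ₗ θ ⟨↑n, hNT n.2⟩ = θ ⟨↑n, hNT n.2⟩ ∘ₗ r := hreq n
    rw [h2, LinearMap.comp_assoc]
  have hφmem : ∀ v, φ v ∈ LinearMap.range c := fun v => hrmem _
  -- build e₀ = c⁻¹ ∘ φ
  set ceq : V ≃ₗ[ℂ] LinearMap.range c := LinearEquiv.ofInjective c hinjc with hceq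
  set e₀ : V →ₗ[ℂ] V :=
    ceq.symm.toLinearMap ∘ₗ (φ.codRestrict (LinearMap.range c) hφmem) with he₀
  have hce : ∀ v, c (e₀ v) = φ v := by
    intro v
    have : ceq (ceq.symm ⟨φ v, hφmem v⟩) = ⟨φ v, hφmem v⟩ := ceq.apply_symm_apply _
    have h2 := congrArg (fun y : LinearMap.range c => (y : W)) this
    simpa [he₀, hceq, LinearEquiv.ofInjective_apply] using h2
  have he₀eq : ∀ n : N,
      e₀ ∘ₗ ρ ⟨a * ↑n * a⁻¹, hN.conj_mem ↑n n.2 a⟩ = ρ n ∘ₗ e₀ := by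
    intro n
    apply LinearMap.ext
    intro v
    apply hinjc
    simp only [LinearMap.comp_apply]
    have h1 := congrArg (fun ψ => ψ v) (hφeq ⟨a * ↑n * a⁻¹, hN.conj_mem ↑n n.2 a⟩)
    simp only [LinearMap.comp_apply] at h1
    have h2 := congrArg (fun ψ => ψ (e₀ v)) (hcequiv n)
    simp only [LinearMap.comp_apply] at h2
    rw [hce, h1, h2, hce]
  -- twisted form
  have he₀eq' : ∀ m : N, e₀ ∘ₗ ρ m = ρ ⟨a⁻¹ * ↑m * a, by
      simpa using hN.conj_mem ↑m m.2 a⁻¹⟩ ∘ₗ e₀ := by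
    intro m
    have := he₀eq ⟨a⁻¹ * ↑m * a, by simpa using hN.conj_mem ↑m m.2 a⁻¹⟩
    convert this using 3
    exact Subtype.ext (by group)
  have he₀ne : e₀ ≠ 0 := by
    intro h0
    apply hrh
    apply LinearMap.ext
    intro v
    have := hce v
    rw [h0] at this
    simp only [LinearMap.zero_apply, map_zero] at this
    simpa [hφ] using this.symm
  -- e₀ bijective
  have hkere : LinearMap.ker e₀ = ⊥ := by
    rcases hρ' (LinearMap.ker e₀) (fun m x hx => by
      have := congrArg (fun ψ => ψ x) (he₀eq' m)
      simp only [LinearMap.comp_apply] at this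
      simp only [LinearMap.mem_ker] at hx ⊢
      rw [this, hx, map_zero]) with hh | hh
    · exact hh
    · exact absurd (LinearMap.ker_eq_top.mp hh) he₀ne
  have hrangee : LinearMap.range e₀ = ⊤ := by
    rcases hρ' (LinearMap.range e₀) (fun m x hx => by
      obtain ⟨v, rfl⟩ := hx
      refine ⟨ρ ⟨a * ↑m * a⁻¹, hN.conj_mem ↑m m.2 a⟩ v, ?_⟩
      have := congrArg (fun ψ => ψ v) (he₀eq m)
      simp only [LinearMap.comp_apply] at this
      exact this) with hh | hh
    · exfalso
      apply he₀ne
      apply LinearMap.ext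
      intro v
      have : e₀ v ∈ LinearMap.range e₀ := LinearMap.mem_range_self _ v
      rw [hh] at this
      simpa using this
    · exact hh
  have hbij : Function.Bijective e₀ :=
    ⟨LinearMap.ker_eq_bot.mp hkere, LinearMap.range_eq_top.mp hrangee⟩
  refine (hT a).mpr ⟨LinearEquiv.ofBijective e₀ hbij, ?_⟩
  intro n
  have heqq : (LinearEquiv.ofBijective e₀ hbij).toLinearMap = e₀ := rfl
  rw [heqq]
  exact he₀eq n

end MainAux

set_option maxHeartbeats 1000000 in
set_option synthInstance.maxHeartbeats 200000 in
theorem induced_from_inertia_group_irreducible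
    {G : Type*} [Group G] [Fintype G] (N : Subgroup G) [hN : N.Normal]
    {V : Type*} [AddCommGroup V] [Module ℂ V]
    (ρ : Representation ℂ N V)
    (hρ : IsSimpleModule (MonoidAlgebra ℂ N) ρ.asModule)
    (T : Subgroup G) (hNT : N ≤ T)
    (hT : ∀ g : G, g ∈ T ↔ ∃ e : V ≃ₗ[ℂ] V, ∀ n : N,
      e.toLinearMap ∘ₗ ρ ⟨g * ↑n * g⁻¹, hN.conj_mem ↑n n.2 g⟩ = ρ n ∘ₗ e.toLinearMap)
    {W : Type*} [AddCommGroup W] [Module ℂ W]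
    (θ : Representation ℂ T W)
    (hθ : IsSimpleModule (MonoidAlgebra ℂ T) θ.asModule)
    (f : V →ₗ[ℂ] W) (hf : f ≠ 0)
    (hfequiv : ∀ n : N, f ∘ₗ ρ n = θ ⟨↑n, hNT n.2⟩ ∘ₗ f) :
    IsSimpleModule (MonoidAlgebra ℂ G) (indRep T θ).asModule := by
  classical
  haveI : Fintype ↥N := Fintype.ofFinite _
  haveI : Fintype ↥T := Fintype.ofFinite _
  set π : Representation ℂ G ↥(indCarrier T θ) := indRep T θ with hπdef
  set ν : Representation ℂ N ↥(indCarrier T θ) := π.comp (Subgroup.subtype N) with hνdef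
  have happ : ∀ (g : G) (m : ↥(indCarrier T θ)) (x : G), ((π g) m).1 x = m.1 (x * g) :=
    fun g m x => rfl
  have hνapp : ∀ (n : N), ν n = π ↑n := fun n => rfl
  -- evaluation maps
  set ev : G → (↥(indCarrier T θ) →ₗ[ℂ] W) := fun g =>
    { toFun := fun m => m.1 g
      map_add' := fun a b => rfl
      map_smul' := fun c a => rfl } with hevdef
  have hevapp : ∀ (g : G) (m : ↥(indCarrier T θ)), ev g m = m.1 g := fun g m => rfl
  -- equivariance of evaluation
  have hev : ∀ (g : G) (n : N) (m : ↥(indCarrier T θ)),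
      ((π ↑n) m).1 g = θ ⟨g * ↑n * g⁻¹, hNT (hN.conj_mem ↑n n.2 g)⟩ (m.1 g) := by
    intro g n m
    rw [happ]
    conv_lhs => rw [show g * (↑n : G) = (g * ↑n * g⁻¹) * g by group]
    exact m.2 ⟨g * ↑n * g⁻¹, hNT (hN.conj_mem ↑n n.2 g)⟩ g
  -- m = 0 iff all values vanish
  have hzero : ∀ m : ↥(indCarrier T θ), (∀ x, m.1 x = 0) → m = 0 := by
    intro m hm
    apply Subtype.ext
    funext x
    exact hm x
  -- the truncation operator PT
  have hPTmem : ∀ m : ↥(indCarrier T θ),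
      (fun x => if x ∈ T then m.1 x else 0) ∈ indCarrier T θ := by
    intro m t x
    show (if (↑t * x : G) ∈ T then m.1 (↑t * x) else 0) = θ t (if x ∈ T then m.1 x else 0)
    by_cases hx : x ∈ T
    · rw [if_pos hx, if_pos (mul_mem t.2 hx)]
      exact m.2 t x
    · rw [if_neg hx, if_neg (fun hc => hx (by simpa using mul_mem (inv_mem t.2) hc)), map_zero]
  set PT : ↥(indCarrier T θ) →ₗ[ℂ] ↥(indCarrier T θ) :=
    { toFun := fun m => ⟨fun x => if x ∈ T then m.1 x else 0, hPTmem m⟩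
      map_add' := fun a b => by
        apply Subtype.ext; funext x
        show (if x ∈ T then (a.1 x + b.1 x) else 0) = _
        by_cases hx : x ∈ T <;> simp [hx]
      map_smul' := fun c a => by
        apply Subtype.ext; funext x
        show (if x ∈ T then c • a.1 x else 0) = _
        by_cases hx : x ∈ T <;> simp [hx] } with hPTdef
  have hPTapp : ∀ (m : ↥(indCarrier T θ)) (x : G),
      (PT m).1 x = if x ∈ T then m.1 x else 0 := fun m x => rfl
  -- PT is ν-equivariant
  have hPTequiv : ∀ (n : N) (m : ↥(indCarrier T θ)), PT ((π ↑n) m) = (π ↑n) (PT m) := by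
    intro n m
    apply Subtype.ext; funext x
    rw [hPTapp, happ, happ, hPTapp]
    by_cases hx : x ∈ T
    · rw [if_pos hx, if_pos (mul_mem hx (hNT n.2))]
    · rw [if_neg hx, if_neg (fun hc => hx (by simpa using mul_mem hc (inv_mem (hNT n.2))))]
  -- atoms live on single cosets
  have hatom : ∀ S : Submodule (MonoidAlgebra ℂ N) ν.asModule, IsAtom S →
      ∃ g₀ : G, ∀ m : ↥(indCarrier T θ), m ∈ subDown ν S →
        ∀ x : G, m.1 x ≠ 0 → x * g₀⁻¹ ∈ T := by
    intro S hS
    have hpSinv := subDown_invt ν S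
    obtain ⟨m₀, hm₀S, hm₀ne⟩ : ∃ m₀, m₀ ∈ subDown ν S ∧ m₀ ≠ 0 := by
      by_contra hcon; push_neg at hcon
      apply hS.1
      rw [eq_bot_iff]
      intro z hz
      have h1 : ν.asModuleEquiv z ∈ subDown ν S := by rw [mem_subDown]; simpa using hz
      have h0 : ν.asModuleEquiv z = 0 := hcon _ h1
      have := congrArg ν.asModuleEquiv.symm h0
      simpa using this
    obtain ⟨g₀, hg₀⟩ : ∃ g₀, m₀.1 g₀ ≠ 0 := by
      by_contra hcon; push_neg at hcon; exact hm₀ne (hzero m₀ hcon)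
    refine ⟨g₀, ?_⟩
    intro m hmS x hmx
    -- injectivity of evaluation at g₀ on S
    have hinj : ∀ m', m' ∈ subDown ν S → m'.1 g₀ = 0 → m' = 0 := by
      intro m' hm'S hm'g
      have hKinv : ∀ (n : N) (y : ↥(indCarrier T θ)),
          y ∈ subDown ν S ⊓ LinearMap.ker (ev g₀) →
          ν n y ∈ subDown ν S ⊓ LinearMap.ker (ev g₀) := by
        rintro n y ⟨hy1, hy2⟩
        refine ⟨hpSinv n y hy1, ?_⟩
        show ((ν n) y).1 g₀ = 0
        rw [hνapp, hev, show y.1 g₀ = 0 from hy2, map_zero]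
      set KA := invtSub ν (subDown ν S ⊓ LinearMap.ker (ev g₀)) hKinv with hKAdef
      have hKle : KA ≤ S := by
        intro z hz
        rw [mem_invtSub] at hz
        have h1 := (Submodule.mem_inf.mp hz).1
        rw [mem_subDown] at h1
        simpa using h1
      have hKne : KA ≠ S := by
        intro hEq
        have h1 : ν.asModuleEquiv.symm m₀ ∈ S := by
          rw [mem_subDown] at hm₀S; exact hm₀S
        rw [← hEq, mem_invtSub] at h1
        have h2 := h1.2
        have : m₀.1 g₀ = 0 := by simpa [hevapp] using h2
        exact hg₀ this
      have hKbot : KA = ⊥ := hS.2 KA (lt_of_le_of_ne hKle hKne)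
      have hmem : ν.asModuleEquiv.symm m' ∈ KA := by
        rw [mem_invtSub]
        refine ⟨by simpa using (mem_subDown ν m').mp hm'S, ?_⟩
        show (ν.asModuleEquiv (ν.asModuleEquiv.symm m')).1 g₀ = 0
        simpa using hm'g
      rw [hKbot] at hmem
      simpa using (by simpa using hmem : ν.asModuleEquiv.symm m' = 0)
    -- evaluation at g₀ restricted to S, and its range
    set evS : ↥(subDown ν S) →ₗ[ℂ] W := (ev g₀) ∘ₗ (subDown ν S).subtype with hevSdef
    have hinjev : Function.Injective evS := by
      intro s₁ s₂ heq
      have hsub : ((↑s₁ : ↥(indCarrier T θ)) - ↑s₂) ∈ subDown ν S := sub_mem s₁.2 s₂.2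
      have hval : ((↑s₁ : ↥(indCarrier T θ)) - ↑s₂).1 g₀ = 0 := by
        have h5 : (ev g₀) ((↑s₁ : ↥(indCarrier T θ)) - ↑s₂) = 0 := by
          rw [map_sub]
          exact sub_eq_zero.mpr heq
        exact h5
      have h6 := hinj _ hsub hval
      exact Subtype.ext (sub_eq_zero.mp h6)
    set Eg := LinearMap.range evS with hEgdef
    have hEginv : ∀ (n : N) (y : W), y ∈ Eg →
        (θ.comp (Subgroup.inclusion hNT)) n y ∈ Eg := by
      rintro n y ⟨s, rfl⟩
      set n₁ : N := ⟨g₀⁻¹ * ↑n * g₀, by simpa using hN.conj_mem ↑n n.2 g₀⁻¹⟩ with hn₁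
      refine ⟨⟨(ν n₁) ↑s, hpSinv n₁ ↑s s.2⟩, ?_⟩
      show ((ν n₁) (↑s : ↥(indCarrier T θ))).1 g₀
        = θ ⟨↑n, hNT n.2⟩ ((↑s : ↥(indCarrier T θ)).1 g₀)
      rw [hνapp, hev]
      exact DFunLike.congr_fun (congrArg θ (Subtype.ext (by simp [hn₁]; group))) _
    obtain ⟨r, hreq, hrid, hrmem⟩ :=
      exists_equivariant_proj (θ.comp (Subgroup.inclusion hNT)) Eg hEginv
    set ceq : ↥(subDown ν S) ≃ₗ[ℂ] ↥Eg := LinearEquiv.ofInjective evS hinjev with hceqdef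
    set B : ↥Eg →ₗ[ℂ] W := ((ev x) ∘ₗ (subDown ν S).subtype) ∘ₗ ceq.symm.toLinearMap
      with hBdef
    have hB : ∀ s : ↥(subDown ν S), B ⟨evS s, LinearMap.mem_range_self _ s⟩
        = (↑s : ↥(indCarrier T θ)).1 x := by
      intro s
      show ((ev x) ∘ₗ (subDown ν S).subtype) (ceq.symm ⟨evS s, _⟩) = _
      rw [show ceq.symm ⟨evS s, LinearMap.mem_range_self _ s⟩ = s from by
        rw [LinearEquiv.symm_apply_eq]
        apply Subtype.ext
        rw [hceqdef]
        exact (LinearEquiv.ofInjective_apply evS (h := hinjev) s).symm]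
      rfl
    set R : W →ₗ[ℂ] W := B ∘ₗ (LinearMap.codRestrict Eg r hrmem) with hRdef
    have hRonE : ∀ s : ↥(subDown ν S), R (evS s) = (↑s : ↥(indCarrier T θ)).1 x := by
      intro s
      show B ⟨r (evS s), hrmem _⟩ = _
      rw [show (⟨r (evS s), hrmem _⟩ : ↥Eg) = ⟨evS s, LinearMap.mem_range_self _ s⟩ from
        Subtype.ext (hrid _ (LinearMap.mem_range_self _ s))]
      exact hB s
    have hRne : R ≠ 0 := by
      intro h0
      apply hmx
      have := hRonE ⟨m, hmS⟩
      rw [h0] at this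
      simpa using this.symm
    obtain ⟨h, hheq, hRh⟩ := wgen N ρ T hNT θ hθ hT f hf hfequiv R hRne
    -- the composite c := R ∘ h is a twisted intertwiner
    have hceq2 : ∀ n : N, (R ∘ₗ h) ∘ₗ ρ n
        = θ ⟨(x * g₀⁻¹) * ↑n * (x * g₀⁻¹)⁻¹,
            hNT (hN.conj_mem ↑n n.2 (x * g₀⁻¹))⟩ ∘ₗ (R ∘ₗ h) := by
      intro n
      apply LinearMap.ext; intro v
      have h1 : h (ρ n v) = θ ⟨↑n, hNT n.2⟩ (h v) := by
        have := congrArg (fun ψ => ψ v) (hheq n)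
        simpa using this
      have h2 : r (θ ⟨↑n, hNT n.2⟩ (h v)) = θ ⟨↑n, hNT n.2⟩ (r (h v)) := by
        have := congrArg (fun ψ => ψ (h v)) (hreq n)
        exact this
      obtain ⟨s, hs⟩ : r (h v) ∈ Eg := hrmem (h v)
      set n₁ : N := ⟨g₀⁻¹ * ↑n * g₀, by simpa using hN.conj_mem ↑n n.2 g₀⁻¹⟩ with hn₁
      set s' : ↥(subDown ν S) := ⟨(ν n₁) ↑s, hpSinv n₁ ↑s s.2⟩ with hs'
      have h3 : θ ⟨↑n, hNT n.2⟩ (evS s) = evS s' := by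
        show θ ⟨↑n, hNT n.2⟩ ((↑s : ↥(indCarrier T θ)).1 g₀)
          = ((ν n₁) (↑s : ↥(indCarrier T θ))).1 g₀
        rw [hνapp, hev]
        exact (DFunLike.congr_fun (congrArg θ (Subtype.ext (by simp [hn₁]; group))) _).symm
      -- LHS
      have hLHS : (R ∘ₗ h) (ρ n v) = (↑s' : ↥(indCarrier T θ)).1 x := by
        show R (h (ρ n v)) = _
        rw [h1]
        show B ⟨r (θ ⟨↑n, hNT n.2⟩ (h v)), hrmem _⟩ = _
        rw [show (⟨r (θ ⟨↑n, hNT n.2⟩ (h v)), hrmem _⟩ : ↥Eg)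
            = ⟨evS s', LinearMap.mem_range_self _ s'⟩ from
          Subtype.ext (by
            show r (θ ⟨↑n, hNT n.2⟩ (h v)) = evS s'
            rw [h2, ← hs, h3])]
        exact hB s'
      -- RHS
      have hRHS : (R ∘ₗ h) v = (↑s : ↥(indCarrier T θ)).1 x := by
        show B ⟨r (h v), hrmem _⟩ = _
        rw [show (⟨r (h v), hrmem _⟩ : ↥Eg) = ⟨evS s, LinearMap.mem_range_self _ s⟩ from
          Subtype.ext (by show r (h v) = evS s; rw [← hs])]
        exact hB s
      show (R ∘ₗ h) (ρ n v) = θ _ ((R ∘ₗ h) v)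
      rw [hLHS, hRHS]
      have h4 : ((ν n₁) (↑s : ↥(indCarrier T θ))).1 x
          = θ ⟨x * ↑n₁ * x⁻¹, hNT (hN.conj_mem ↑n₁ n₁.2 x)⟩ ((↑s : ↥(indCarrier T θ)).1 x) := by
        rw [hνapp, hev]
      show ((ν n₁) (↑s : ↥(indCarrier T θ))).1 x = _
      rw [h4]
      exact DFunLike.congr_fun (congrArg θ (Subtype.ext (by simp [hn₁]; group))) _
    exact toE N ρ T hNT θ hρ hθ hT f hf hfequiv (x * g₀⁻¹) (R ∘ₗ h) hRh hceq2
  -- truncation stays inside invariant submodules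
  have hkey : ∀ (pQ : Submodule ℂ ↥(indCarrier T θ)),
      (∀ (g : G) (x : ↥(indCarrier T θ)), x ∈ pQ → (π g) x ∈ pQ) →
      ∀ u ∈ pQ, PT u ∈ pQ := by
    intro pQ hinv u hu
    haveI : IsSemisimpleModule (MonoidAlgebra ℂ ↥N) ν.asModule := by haveI := complemented_asModule ν; exact ⟨⟩
    have hpQν : ∀ (n : N) (x : ↥(indCarrier T θ)), x ∈ pQ → ν n x ∈ pQ :=
      fun n x hx => hinv ↑n x hx
    have hU'inv : ∀ (n : N) (x : ↥(indCarrier T θ)), x ∈ pQ ⊓ pQ.comap PT →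
        ν n x ∈ pQ ⊓ pQ.comap PT := by
      rintro n x ⟨hx1, hx2⟩
      refine ⟨hpQν n x hx1, ?_⟩
      show PT (ν n x) ∈ pQ
      rw [hνapp, hPTequiv]
      exact hinv ↑n _ hx2
    have hle : invtSub ν pQ hpQν ≤ invtSub ν (pQ ⊓ pQ.comap PT) hU'inv := by
      have hss := @IsSemisimpleModule.sSup_simples_le (MonoidAlgebra ℂ ↥N) _ ν.asModule _ (by exact inferInstance) (by exact this) (by exact invtSub ν pQ hpQν)
      rw [← hss]
      apply sSup_le
      rintro S ⟨hSsimple, hSle⟩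
      have hSatom : IsAtom S := by exact (@isSimpleModule_iff_isAtom (MonoidAlgebra ℂ ↥N) _ ν.asModule _ (by exact inferInstance) (by exact S)).mp hSsimple
      obtain ⟨g₀, hg₀⟩ := hatom S hSatom
      intro x hxS
      rw [mem_invtSub]
      have hxQ : ν.asModuleEquiv x ∈ pQ := by
        have := hSle hxS
        rwa [mem_invtSub] at this
      refine ⟨hxQ, ?_⟩
      show PT (ν.asModuleEquiv x) ∈ pQ
      have hxsupp : ∀ y : G, (ν.asModuleEquiv x).1 y ≠ 0 → y * g₀⁻¹ ∈ T := by
        intro y hy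
        refine hg₀ (ν.asModuleEquiv x) ?_ y hy
        rw [mem_subDown]
        simpa using hxS
      by_cases hg₀T : g₀ ∈ T
      · have heq : PT (ν.asModuleEquiv x) = ν.asModuleEquiv x := by
          apply Subtype.ext; funext y
          rw [hPTapp]
          by_cases hy : y ∈ T
          · rw [if_pos hy]
          · rw [if_neg hy]
            rcases eq_or_ne ((ν.asModuleEquiv x).1 y) 0 with h | h
            · exact h.symm
            · exact absurd (by simpa using mul_mem (hxsupp y h) hg₀T) hy
        rw [heq]; exact hxQ
      · have heq : PT (ν.asModuleEquiv x) = 0 := by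
          apply Subtype.ext; funext y
          rw [hPTapp]
          show (if y ∈ T then (ν.asModuleEquiv x).1 y else 0) = 0
          by_cases hy : y ∈ T
          · rw [if_pos hy]
            rcases eq_or_ne ((ν.asModuleEquiv x).1 y) 0 with h | h
            · exact h
            · exact absurd (by simpa using mul_mem (inv_mem hy) (hxsupp y h)) hg₀T
          · rw [if_neg hy]
        rw [heq]; exact pQ.zero_mem
    have hmem : ν.asModuleEquiv.symm u ∈ invtSub ν pQ hpQν := by
      rw [mem_invtSub]; simpa using hu
    have h2 := hle hmem
    rw [mem_invtSub] at h2
    obtain ⟨_, h3⟩ := h2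
    simpa using h3
  -- a nonzero element of the induced module
  have hntW : Nontrivial W := nontrivial_of_simple θ hθ
  obtain ⟨w₀, hw₀⟩ := exists_ne (0 : W)
  have hF₀mem : (fun x => if hx : x ∈ T then θ ⟨x, hx⟩ w₀ else 0) ∈ indCarrier T θ := by
    intro t x
    show (if hx : (↑t * x : G) ∈ T then θ ⟨↑t * x, hx⟩ w₀ else 0)
      = θ t (if hx : x ∈ T then θ ⟨x, hx⟩ w₀ else 0)
    by_cases hx : x ∈ T
    · rw [dif_pos hx, dif_pos (mul_mem t.2 hx)]
      have : (⟨↑t * x, mul_mem t.2 hx⟩ : T) = t * ⟨x, hx⟩ := rfl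
      rw [this, map_mul]
      rfl
    · rw [dif_neg hx, dif_neg (fun hc => hx (by simpa using mul_mem (inv_mem t.2) hc)), map_zero]
  set F₀ : ↥(indCarrier T θ) := ⟨_, hF₀mem⟩ with hF₀def
  have hF₀ne : F₀ ≠ 0 := by
    intro hc
    have : F₀.1 1 = 0 := by rw [hc]; rfl
    rw [show F₀.1 1 = θ ⟨1, one_mem T⟩ w₀ from dif_pos (one_mem T)] at this
    rw [show (⟨1, one_mem T⟩ : T) = 1 from rfl, map_one] at this
    exact hw₀ this
  -- main invariant-subspace argument
  apply simple_of_invariant π ⟨F₀, hF₀ne⟩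
  intro pQ hpQinv
  rcases eq_or_ne pQ ⊥ with hbot | hne
  · exact Or.inl hbot
  right
  -- get an element with nonzero value at 1, truncated
  obtain ⟨u, hu, hune⟩ : ∃ u, u ∈ pQ ∧ u ≠ 0 := by
    by_contra hcon; push_neg at hcon
    exact hne ((Submodule.eq_bot_iff pQ).mpr fun x hx => hcon x hx)
  obtain ⟨x₀, hx₀⟩ : ∃ x₀, u.1 x₀ ≠ 0 := by
    by_contra hcon; push_neg at hcon
    exact hune (hzero u hcon)
  have hu' : (π x₀) u ∈ pQ := hpQinv x₀ u hu
  have hu'1 : ((π x₀) u).1 1 ≠ 0 := by rw [happ, one_mul]; exact hx₀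
  have hm₀Q : PT ((π x₀) u) ∈ pQ := hkey pQ hpQinv _ hu'
  have hm₀1 : (PT ((π x₀) u)).1 1 ≠ 0 := by rw [hPTapp, if_pos (one_mem T)]; exact hu'1
  -- functions supported on T
  set M₀ : Submodule ℂ ↥(indCarrier T θ) :=
    { carrier := {m | ∀ x : G, x ∉ T → m.1 x = 0}
      add_mem' := fun {a b} ha hb x hx => by
        show a.1 x + b.1 x = 0
        rw [ha x hx, hb x hx, add_zero]
      zero_mem' := fun x _ => rfl
      smul_mem' := fun c a ha x hx => by
        show c • a.1 x = 0
        rw [ha x hx, smul_zero] } with hM₀def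
  have hPTM₀ : ∀ m, PT m ∈ M₀ := fun m x hx => by rw [hPTapp, if_neg hx]
  -- image of pQ ⊓ M₀ in W
  set Wsub : Submodule ℂ W := (pQ ⊓ M₀).map (ev 1) with hWsubdef
  have hWinv : ∀ (t : T) (w : W), w ∈ Wsub → θ t w ∈ Wsub := by
    rintro t w ⟨m, hm, rfl⟩
    obtain ⟨hmQ, hmM₀⟩ := hm
    refine ⟨(π ↑t) m, ⟨hpQinv ↑t m hmQ, fun x hx => by
      rw [happ]
      exact hmM₀ (x * ↑t) fun hc => hx (by simpa using mul_mem hc (inv_mem t.2))⟩, ?_⟩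
    rw [hevapp, hevapp, happ, one_mul]
    have := m.2 t 1
    rw [mul_one] at this
    exact this
  have hWne : Wsub ≠ ⊥ := by
    intro hbot
    have : ev 1 (PT ((π x₀) u)) ∈ Wsub := ⟨_, ⟨hm₀Q, hPTM₀ _⟩, rfl⟩
    rw [hbot] at this
    exact hm₀1 (by simpa [hevapp] using this)
  have hWtop : Wsub = ⊤ := by
    rcases invariant_eq_bot_or_top θ hθ Wsub hWinv with h | h
    · exact absurd h hWne
    · exact h
  -- M₀ is contained in pQ
  have hM₀le : ∀ m ∈ M₀, m ∈ pQ := by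
    intro m hm
    have h1 : ev 1 m ∈ Wsub := hWtop ▸ Submodule.mem_top
    obtain ⟨m', ⟨hm'Q, hm'M₀⟩, hm'1⟩ := h1
    have : m' = m := by
      apply Subtype.ext; funext x
      by_cases hx : x ∈ T
      · have e1 : m.1 x = θ ⟨x, hx⟩ (m.1 1) := by
          have := m.2 ⟨x, hx⟩ 1
          rwa [mul_one] at this
        have e2 : m'.1 x = θ ⟨x, hx⟩ (m'.1 1) := by
          have := m'.2 ⟨x, hx⟩ 1
          rwa [mul_one] at this
        rw [e1, e2]
        exact congrArg _ hm'1
      · rw [hm'M₀ x hx, hm x hx]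
    exact this ▸ hm'Q
  -- conclude pQ = ⊤
  rw [eq_top_iff]
  intro m _
  have hcard : ((Fintype.card T : ℂ)) ≠ 0 := by
    exact_mod_cast Fintype.card_ne_zero
  have hdecomp : (Fintype.card T : ℂ) • m = ∑ g : G, (π g⁻¹) (PT ((π g) m)) := by
    apply Subtype.ext
    funext x
    have hterm : ∀ g : G, ((π g⁻¹) (PT ((π g) m))).1 x
        = if x * g⁻¹ ∈ T then m.1 x else 0 := by
      intro g
      rw [happ, hPTapp]
      by_cases hg : x * g⁻¹ ∈ T
      · rw [if_pos hg, if_pos hg, happ]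
        congr 1
        group
      · rw [if_neg hg, if_neg hg]
    have hcoe : ((∑ g : G, (π g⁻¹) (PT ((π g) m))) : ↥(indCarrier T θ)).1 x
        = ∑ g : G, ((π g⁻¹) (PT ((π g) m))).1 x := by
      rw [show (((∑ g : G, (π g⁻¹) (PT ((π g) m))) : ↥(indCarrier T θ)) : G → W)
        = ∑ g : G, (((π g⁻¹) (PT ((π g) m))) : G → W) from
          map_sum (Submodule.subtype (indCarrier T θ)) _ _]
      exact Finset.sum_apply x Finset.univ _
    rw [hcoe]
    simp only [hterm]
    rw [Finset.sum_ite, Finset.sum_const, Finset.sum_const_zero, add_zero]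
    have hcardeq : (Finset.univ.filter (fun g : G => x * g⁻¹ ∈ T)).card = Fintype.card T := by
      rw [Fintype.card, eq_comm]
      refine Finset.card_bij' (fun (t : T) _ => (↑t)⁻¹ * x)
        (fun g hg => ⟨x * g⁻¹, (Finset.mem_filter.mp hg).2⟩) ?_ ?_ ?_ ?_
      · intro t _
        refine Finset.mem_filter.mpr ⟨Finset.mem_univ _, ?_⟩
        have : x * ((↑t)⁻¹ * x)⁻¹ = ↑t := by group
        rw [this]; exact t.2
      · intro g _; exact Finset.mem_univ _
      · intro t _
        apply Subtype.ext
        show x * ((↑t)⁻¹ * x)⁻¹ = ↑t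
        group
      · intro g _
        show (x * g⁻¹)⁻¹ * x = g
        group
    rw [hcardeq]
    show (Fintype.card T : ℂ) • m.1 x = _
    rw [Nat.cast_smul_eq_nsmul]
  have hsum_mem : ∑ g : G, (π g⁻¹) (PT ((π g) m)) ∈ pQ := by
    apply pQ.sum_mem
    intro g _
    exact hpQinv g⁻¹ _ (hM₀le _ (hPTM₀ ((π g) m)))
  have : m = (Fintype.card T : ℂ)⁻¹ • ((Fintype.card T : ℂ) • m) := by
    rw [smul_smul, inv_mul_cancel₀ hcard, one_smul]
  rw [this, hdecomp]
  exact pQ.smul_mem _ hsum_mem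
end
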